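/- Let G be a simple graph with weights w : E → ℚ, and suppose the positive edges E⁺ can be covered by feasible sets E₁, …, E_k (so E⁺ = E₁ ∪ ⋯ ∪ E_k). Then some Eᵢ has total weight at least (1/k) · Σ_{e ∈ E⁺} w(e), and the partition achieving that Eᵢ is a coalition structure whose value is at least (1/k) times the optimal coalition structure value. -/

import Mathlib

open scoped Classical
open Finset

/-- Value of a coalition structure (labelling `p`) in a weighted graph game. -/
noncomputable def gval {V : Type} [Fintype V] {α : Type} (G : SimpleGraph V)
    (w : Sym2 V → ℚ) (p : V → α) : ℚ :=
  ∑ e : Sym2 V, if e ∈ G.edgeSet ∧ (Sym2.map p e).IsDiag then w e else 0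

/-- Sum of the weights of all positively-weighted edges of `G`. -/
noncomputable def posSum {V : Type} [Fintype V] (G : SimpleGraph V)
    (w : Sym2 V → ℚ) : ℚ :=
  ∑ e : Sym2 V, if e ∈ G.edgeSet ∧ 0 < w e then w e else 0

/-- If the positive edges are covered by `k` feasible sets `Es i`, each
achieved by a partition `p i` avoiding all negative edges, then some `Es i`
has total weight at least `(1/k)` of the total positive weight, and the
corresponding partition has value at least `(1/k)` of the optimal coalition
structure value. -/
theorem feasible_cover_approximation {V : Type} [Fintype V]
    (G : SimpleGraph V) (w : Sym2 V → ℚ) (k : ℕ) (hk : 1 ≤ k)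
    (Es : Fin k → Finset (Sym2 V)) (p : Fin k → V → ℕ)
    (hpos : ∀ i, ∀ e ∈ Es i, e ∈ G.edgeSet ∧ 0 < w e)
    (hach : ∀ i, ∀ e ∈ Es i, (Sym2.map (p i) e).IsDiag)
    (hneg : ∀ i, ∀ u v : V, G.Adj u v → w s(u, v) < 0 → p i u ≠ p i v)
    (hcover : ∀ e : Sym2 V, e ∈ G.edgeSet → 0 < w e → ∃ i, e ∈ Es i) :
    ∃ i : Fin k,
      posSum G w ≤ (k : ℚ) * ∑ e ∈ Es i, w e ∧
      ∀ q : V → ℕ, gval G w q ≤ (k : ℚ) * gval G w (p i) := by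

  classical
  haveI : Nonempty (Fin k) := ⟨⟨0, hk⟩⟩
  obtain ⟨i, -, hi⟩ := Finset.exists_max_image (Finset.univ : Finset (Fin k))
    (fun j => ∑ e ∈ Es j, w e) ⟨Classical.arbitrary _, Finset.mem_univ _⟩
  -- rewrite each Es-sum as a sum over all of Sym2 V
  have hEs : ∀ j, ∑ e ∈ Es j, w e = ∑ e : Sym2 V, if e ∈ Es j then w e else 0 := by
    intro j
    rw [Finset.sum_ite_mem, Finset.univ_inter]
  -- step 1: posSum ≤ sum over all j
  have h1 : posSum G w ≤ ∑ j : Fin k, ∑ e ∈ Es j, w e := by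
    have hswap : ∑ j : Fin k, ∑ e ∈ Es j, w e
        = ∑ e : Sym2 V, ∑ j : Fin k, if e ∈ Es j then w e else 0 := by
      simp only [hEs]; rw [Finset.sum_comm]
    rw [hswap, posSum]
    refine Finset.sum_le_sum fun e _ => ?_
    by_cases h : e ∈ G.edgeSet ∧ 0 < w e
    · obtain ⟨j, hj⟩ := hcover e h.1 h.2
      have := Finset.single_le_sum
        (f := fun j' : Fin k => if e ∈ Es j' then w e else 0)
        (fun j' _ => by split; exacts [le_of_lt h.2, le_rfl])
        (Finset.mem_univ j)
      simpa [h, hj] using this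
    · simp only [h, if_false]
      refine Finset.sum_nonneg fun j _ => ?_
      split
      · exact le_of_lt (hpos j e (by assumption)).2
      · exact le_refl 0
  -- step 2: sum over all j ≤ k * (max term)
  have h2 : ∑ j : Fin k, ∑ e ∈ Es j, w e ≤ (k : ℚ) * ∑ e ∈ Es i, w e := by
    calc ∑ j : Fin k, ∑ e ∈ Es j, w e
        ≤ (Finset.univ : Finset (Fin k)).card • (∑ e ∈ Es i, w e) :=
          Finset.sum_le_card_nsmul _ _ _ (fun j _ => hi j (Finset.mem_univ j))
      _ = (k : ℚ) * ∑ e ∈ Es i, w e := by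
          simp [Finset.card_univ, nsmul_eq_mul]
  -- step 3: any gval is at most posSum
  have h3 : ∀ q : V → ℕ, gval G w q ≤ posSum G w := by
    intro q
    rw [gval, posSum]
    refine Finset.sum_le_sum fun e _ => ?_
    split
    · rename_i h
      rcases lt_or_ge 0 (w e) with hw | hw
      · simp [h.1, hw]
      · split
        · exact le_refl _
        · exact hw
    · split
      · rename_i h; exact le_of_lt h.2
      · exact le_refl 0
  -- step 4: ∑ e ∈ Es i, w e ≤ gval (p i)
  have h4 : ∑ e ∈ Es i, w e ≤ gval G w (p i) := by
    rw [hEs, gval]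
    refine Finset.sum_le_sum fun e _ => ?_
    by_cases he : e ∈ Es i
    · have h1 := hpos i e he
      have h2 := hach i e he
      simp [he, h1.1, h2]
    · simp only [he, if_false]
      split
      · rename_i h
        induction e using Sym2.ind with
        | _ u v =>
          have hadj : G.Adj u v := h.1
          have hdiag : p i u = p i v := by
            simpa [Sym2.map_pair_eq] using h.2
          by_contra hlt
          exact hneg i u v hadj (lt_of_not_ge hlt) hdiag
      · exact le_refl 0
  refine ⟨i, le_trans h1 h2, fun q => ?_⟩
  calc gval G w q ≤ posSum G w := h3 q
    _ ≤ (k : ℚ) * ∑ e ∈ Es i, w e := le_trans h1 h2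
    _ ≤ (k : ℚ) * gval G w (p i) := by
        exact mul_le_mul_of_nonneg_left h4 (by positivity)
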